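/- For every k ∈ [n] and every permutation σ of [n] with σ(i) > k for all 1 ≤ i ≤ k, define σ' by: σ'(i) = σ(i+k) − k if 1 ≤ i ≤ n−k and σ(i+k) > k; σ'(i) = σ(i+k) + n − k if 1 ≤ i ≤ n−k and σ(i+k) ≤ k; and σ'(i) = σ(i+k−n) − k if n−k+1 ≤ i ≤ n. Then σ' is a permutation of [n] with σ'(n+1−i) < n+1−k for all 1 ≤ i ≤ k, the map σ ↦ σ' is a bijection between these two sets, and it preserves both wex and cr: wex(σ') = wex(σ) and cr(σ') = cr(σ). -/

import Mathlib

/-- Number of weak excedances of a permutation of `[n]` (0-indexed: `i ≤ σ i`). -/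
def wex {n : ℕ} (σ : Equiv.Perm (Fin n)) : ℕ :=
  (Finset.univ.filter (fun i : Fin n => (i : ℕ) ≤ (σ i : ℕ))).card

/-- Number of crossings of a permutation of `[n]`. -/
def cr {n : ℕ} (σ : Equiv.Perm (Fin n)) : ℕ :=
  (∑ i : Fin n,
      (Finset.univ.filter
        (fun j : Fin n => (j : ℕ) < (i : ℕ) ∧ (i : ℕ) ≤ (σ j : ℕ) ∧ (σ j : ℕ) < (σ i : ℕ))).card)
  + ∑ i : Fin n,
      (Finset.univ.filter
        (fun j : Fin n => (i : ℕ) < (j : ℕ) ∧ (σ j : ℕ) < (i : ℕ) ∧ (σ i : ℕ) < (σ j : ℕ))).card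

namespace Stmt14Aux

open Fin.NatCast

def C4 (i j a b : ℕ) : Prop := (j < i ∧ i ≤ b ∧ b < a) ∨ (a < b ∧ b < i ∧ i < j)

instance (i j a b : ℕ) : Decidable (C4 i j a b) := by unfold C4; infer_instance

lemma cr_eq_sum {n : ℕ} (τ : Equiv.Perm (Fin n)) :
    cr τ = ∑ i : Fin n, ∑ j : Fin n,
      (if C4 (i : ℕ) (j : ℕ) ((τ i : Fin n) : ℕ) ((τ j : Fin n) : ℕ) then 1 else 0) := by
  unfold cr
  rw [← Finset.sum_add_distrib]
  refine Finset.sum_congr rfl fun i _ => ?_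
  rw [Finset.card_filter, Finset.card_filter, ← Finset.sum_add_distrib]
  refine Finset.sum_congr rfl fun j _ => ?_
  simp only [C4]
  split_ifs <;> simp_all <;> omega

def conj {n : ℕ} [NeZero n] (c : Fin n) (σ : Equiv.Perm (Fin n)) : Equiv.Perm (Fin n) :=
  (Equiv.addRight c).trans (σ.trans (Equiv.addRight c).symm)

lemma conj_apply {n : ℕ} [NeZero n] (c : Fin n) (σ : Equiv.Perm (Fin n)) (x : Fin n) :
    conj c σ x = σ (x + c) - c := by
  simp [conj, Equiv.addRight, Equiv.trans_apply, sub_eq_add_neg]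

def d (n x : ℕ) : ℕ := if x = 0 then n - 1 else x - 1

lemma dec_val {n : ℕ} [NeZero n] (x : Fin n) : ((x - 1 : Fin n) : ℕ) = d n (x : ℕ) := by
  have hn : 0 < n := Nat.pos_of_ne_zero (NeZero.ne n)
  have hx := x.isLt
  rw [Fin.coe_sub]
  rw [Fin.val_one' n]
  unfold d
  rcases Nat.lt_or_ge 1 n with h | h
  · rw [Nat.mod_eq_of_lt h]
    rcases Nat.eq_zero_or_pos (x : ℕ) with h0 | h0
    · rw [h0, if_pos rfl, Nat.add_zero, Nat.mod_eq_of_lt (by omega)]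
    · rw [if_neg (by omega)]
      have e : n - 1 + (x : ℕ) = n + ((x : ℕ) - 1) := by omega
      rw [e, Nat.add_mod_left, Nat.mod_eq_of_lt (by omega)]
  · have hn1 : n = 1 := by omega
    subst hn1
    simp

lemma C4_dec {n i j a b : ℕ} (hi : i < n) (hj : j < n) (ha : a < n) (hb : b < n)
    (hia : i = 0 ↔ a = 0) (hjb : j = 0 ↔ b = 0) :
    C4 (d n i) (d n j) (d n a) (d n b) ↔ C4 i j a b := by
  unfold C4 d
  split_ifs <;> omega

lemma sum_perm {n : ℕ} (τ : Equiv.Perm (Fin n)) (f : Fin n → ℕ) :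
    ∑ j : Fin n, f (τ j) = ∑ j : Fin n, f j :=
  Equiv.sum_comp τ f

lemma decomp {n : ℕ} [NeZero n] (i0 : Fin n) (hi0 : i0 ≠ 0) (f : Fin n → ℕ) :
    ∑ x : Fin n, f x
      = f 0 + f i0 + ∑ x ∈ (Finset.univ.erase (0 : Fin n)).erase i0, f x := by
  rw [← Finset.add_sum_erase _ f (Finset.mem_univ (0 : Fin n))]
  rw [← Finset.add_sum_erase _ f (Finset.mem_erase.2 ⟨hi0, Finset.mem_univ i0⟩)]
  ring


-- pointwise C4 facts (pure ℕ, discharged by omega)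
lemma nX0 {n j a b : ℕ} (hj : j < n) (ha : a < n) (hb : b < n) :
    ¬ C4 (d n 0) (d n j) (d n a) (d n b) := by unfold C4 d; split_ifs <;> omega

lemma nY0 {j a b : ℕ} : ¬ C4 0 j a b := by unfold C4; omega

lemma nYi0col {i i0 a : ℕ} : ¬ C4 i i0 a 0 := by unfold C4; omega

lemma nXi0col {n i i0 a : ℕ} (hi : i < n) (hi0 : i0 < n) (ha : a < n)
    (h1 : i ≠ 0) (h2 : i0 ≠ 0) (h3 : a ≠ 0) :
    ¬ C4 (d n i) (d n i0) (d n a) (d n 0) := by unfold C4 d; split_ifs <;> omega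

lemma eYi0row {i0 j b : ℕ} (hb0 : b = 0 → j = i0) :
    C4 i0 j 0 b ↔ (b < i0 ∧ i0 < j) := by unfold C4; omega

lemma eXi0row {n i0 j b : ℕ} (hj : j < n) (hb : b < n) (hi0 : i0 < n)
    (h1 : j ≠ 0) (h2 : b ≠ 0) (h3 : i0 ≠ 0) :
    C4 (d n i0) (d n j) (d n 0) (d n b) ↔ (j < i0 ∧ i0 ≤ b) := by
  unfold C4 d; split_ifs <;> omega

lemma nXi0zero {n i0 t : ℕ} (hi0 : i0 < n) (ht : t < n) (h2 : i0 ≠ 0) (h3 : t ≠ 0) :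
    ¬ C4 (d n i0) (d n 0) (d n 0) (d n t) := by unfold C4 d; split_ifs <;> omega

lemma nXdiag {i a b : ℕ} : ¬ C4 i i a b := by unfold C4; omega

lemma eXcol0 {n i a t : ℕ} (hi : i < n) (ha : a < n) (ht : t < n)
    (h1 : i ≠ 0) (h2 : a ≠ 0) (h3 : t ≠ 0) :
    C4 (d n i) (d n 0) (d n a) (d n t) ↔ (a < t ∧ t < i) := by
  unfold C4 d; split_ifs <;> omega

lemma eYcol0 {i a t : ℕ} (h1 : i ≠ 0) : C4 i 0 a t ↔ (i ≤ t ∧ t < a) := by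
  unfold C4; omega

lemma key_count {n : ℕ} [NeZero n] (τ : Equiv.Perm (Fin n)) :
    ∑ i : Fin n, ∑ j : Fin n,
        (if C4 (d n (i:ℕ)) (d n (j:ℕ)) (d n ((τ i : Fin n):ℕ)) (d n ((τ j : Fin n):ℕ)) then 1 else 0)
      = ∑ i : Fin n, ∑ j : Fin n,
        (if C4 (i:ℕ) (j:ℕ) ((τ i : Fin n):ℕ) ((τ j : Fin n):ℕ) then 1 else 0) := by
  have hvz : ((0 : Fin n) : ℕ) = 0 := Fin.val_zero n
  by_cases h0 : τ 0 = 0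
  · refine Finset.sum_congr rfl fun i _ => Finset.sum_congr rfl fun j _ => ?_
    have key : ∀ x : Fin n, ((x:ℕ) = 0 ↔ ((τ x : Fin n):ℕ) = 0) := by
      intro x
      have h1 : ((x:ℕ) = 0) ↔ x = 0 := by rw [Fin.ext_iff, hvz]
      have h2 : (((τ x : Fin n):ℕ) = 0) ↔ τ x = 0 := by rw [Fin.ext_iff, hvz]
      rw [h1, h2]
      constructor
      · intro h; rw [h, h0]
      · intro h; exact τ.injective (h.trans h0.symm)
    exact if_congr (C4_dec i.isLt j.isLt (τ i).isLt (τ j).isLt (key i) (key j)) rfl rfl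
  · -- τ 0 ≠ 0
    set i0 := τ.symm 0 with hi0def
    have hti0 : τ i0 = 0 := τ.apply_symm_apply 0
    have hi0ne : i0 ≠ 0 := fun h => h0 (h ▸ hti0)
    have hvne : ∀ x : Fin n, x ≠ 0 → (x : ℕ) ≠ 0 := by
      intro x hx h
      exact hx (Fin.ext (by rw [h, hvz]))
    have htv : ((τ 0 : Fin n) : ℕ) ≠ 0 := hvne _ h0
    have hi0v : ((i0 : Fin n) : ℕ) ≠ 0 := hvne _ hi0ne
    have htauv : ∀ x : Fin n, x ≠ i0 → ((τ x : Fin n) : ℕ) ≠ 0 := by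
      intro x hx h
      apply hx
      apply τ.injective
      rw [hti0]
      exact Fin.ext (by rw [h, hvz])
    have htaui0 : ((τ i0 : Fin n) : ℕ) = 0 := by rw [hti0, hvz]
    set U := (Finset.univ.erase (0 : Fin n)).erase i0 with hU
    have hmemU : ∀ x : Fin n, x ∈ U ↔ (x ≠ i0 ∧ x ≠ 0) := by
      intro x
      rw [hU, Finset.mem_erase, Finset.mem_erase]
      simp
    -- outer decompositions
    have goalX : (∑ i : Fin n, ∑ j : Fin n,
          (if C4 (d n (i:ℕ)) (d n (j:ℕ)) (d n ((τ i : Fin n):ℕ)) (d n ((τ j : Fin n):ℕ)) then 1 else 0))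
        = (∑ j : Fin n, (if C4 (d n ((0 : Fin n):ℕ)) (d n (j:ℕ)) (d n ((τ 0 : Fin n):ℕ)) (d n ((τ j : Fin n):ℕ)) then 1 else 0))
          + (∑ j : Fin n, (if C4 (d n (i0:ℕ)) (d n (j:ℕ)) (d n ((τ i0 : Fin n):ℕ)) (d n ((τ j : Fin n):ℕ)) then 1 else 0))
          + ∑ i ∈ U, ∑ j : Fin n,
            (if C4 (d n (i:ℕ)) (d n (j:ℕ)) (d n ((τ i : Fin n):ℕ)) (d n ((τ j : Fin n):ℕ)) then 1 else 0) :=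
      decomp i0 hi0ne _
    have goalY : (∑ i : Fin n, ∑ j : Fin n,
          (if C4 (i:ℕ) (j:ℕ) ((τ i : Fin n):ℕ) ((τ j : Fin n):ℕ) then 1 else 0))
        = (∑ j : Fin n, (if C4 ((0 : Fin n):ℕ) (j:ℕ) ((τ 0 : Fin n):ℕ) ((τ j : Fin n):ℕ) then 1 else 0))
          + (∑ j : Fin n, (if C4 (i0:ℕ) (j:ℕ) ((τ i0 : Fin n):ℕ) ((τ j : Fin n):ℕ) then 1 else 0))
          + ∑ i ∈ U, ∑ j : Fin n,
            (if C4 (i:ℕ) (j:ℕ) ((τ i : Fin n):ℕ) ((τ j : Fin n):ℕ) then 1 else 0) :=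
      decomp i0 hi0ne _
    -- zero rows
    have row0X : (∑ j : Fin n, (if C4 (d n ((0 : Fin n):ℕ)) (d n (j:ℕ)) (d n ((τ 0 : Fin n):ℕ)) (d n ((τ j : Fin n):ℕ)) then 1 else 0)) = 0 := by
      refine Finset.sum_eq_zero fun j _ => if_neg ?_
      rw [hvz]
      exact nX0 j.isLt (τ 0).isLt (τ j).isLt
    have row0Y : (∑ j : Fin n, (if C4 ((0 : Fin n):ℕ) (j:ℕ) ((τ 0 : Fin n):ℕ) ((τ j : Fin n):ℕ) then 1 else 0)) = 0 := by
      refine Finset.sum_eq_zero fun j _ => if_neg ?_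
      rw [hvz]
      exact nY0
    -- row i0 of Y: h4
    have h4 : (∑ j : Fin n, (if C4 (i0:ℕ) (j:ℕ) ((τ i0 : Fin n):ℕ) ((τ j : Fin n):ℕ) then 1 else 0))
        = ∑ j : Fin n, (if (((τ j : Fin n):ℕ) < (i0:ℕ) ∧ (i0:ℕ) < (j:ℕ)) then 1 else 0) := by
      refine Finset.sum_congr rfl fun j _ => if_congr ?_ rfl rfl
      rw [htaui0]
      refine eYi0row ?_
      intro hb
      have hj : j = i0 := by
        apply τ.injective
        rw [hti0]
        exact Fin.ext (by rw [hb, hvz])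
      rw [hj]
    -- row i0 of X: h3
    have h3 : (∑ j : Fin n, (if C4 (d n (i0:ℕ)) (d n (j:ℕ)) (d n ((τ i0 : Fin n):ℕ)) (d n ((τ j : Fin n):ℕ)) then 1 else 0))
          + (if ((i0:ℕ) ≤ ((τ 0 : Fin n):ℕ)) then 1 else 0)
        = ∑ j : Fin n, (if ((j:ℕ) < (i0:ℕ) ∧ (i0:ℕ) ≤ ((τ j : Fin n):ℕ)) then 1 else 0) := by
      have d1 : (∑ j : Fin n, (if C4 (d n (i0:ℕ)) (d n (j:ℕ)) (d n ((τ i0 : Fin n):ℕ)) (d n ((τ j : Fin n):ℕ)) then 1 else 0))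
          = (if C4 (d n (i0:ℕ)) (d n ((0:Fin n):ℕ)) (d n ((τ i0 : Fin n):ℕ)) (d n ((τ 0 : Fin n):ℕ)) then 1 else 0)
            + (if C4 (d n (i0:ℕ)) (d n (i0:ℕ)) (d n ((τ i0 : Fin n):ℕ)) (d n ((τ i0 : Fin n):ℕ)) then 1 else 0)
            + ∑ j ∈ U, (if C4 (d n (i0:ℕ)) (d n (j:ℕ)) (d n ((τ i0 : Fin n):ℕ)) (d n ((τ j : Fin n):ℕ)) then 1 else 0) :=
        decomp i0 hi0ne _
      have d2 : (∑ j : Fin n, (if ((j:ℕ) < (i0:ℕ) ∧ (i0:ℕ) ≤ ((τ j : Fin n):ℕ)) then 1 else 0))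
          = (if (((0:Fin n):ℕ) < (i0:ℕ) ∧ (i0:ℕ) ≤ ((τ 0 : Fin n):ℕ)) then 1 else 0)
            + (if ((i0:ℕ) < (i0:ℕ) ∧ (i0:ℕ) ≤ ((τ i0 : Fin n):ℕ)) then 1 else 0)
            + ∑ j ∈ U, (if ((j:ℕ) < (i0:ℕ) ∧ (i0:ℕ) ≤ ((τ j : Fin n):ℕ)) then 1 else 0) :=
        decomp i0 hi0ne _
      have e1 : (if C4 (d n (i0:ℕ)) (d n ((0:Fin n):ℕ)) (d n ((τ i0 : Fin n):ℕ)) (d n ((τ 0 : Fin n):ℕ)) then 1 else 0) = 0 := by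
        refine if_neg ?_
        rw [hvz, htaui0]
        exact nXi0zero i0.isLt (τ 0).isLt hi0v htv
      have e2 : (if C4 (d n (i0:ℕ)) (d n (i0:ℕ)) (d n ((τ i0 : Fin n):ℕ)) (d n ((τ i0 : Fin n):ℕ)) then 1 else 0) = 0 :=
        if_neg nXdiag
      have e3 : ∀ j ∈ U, (if C4 (d n (i0:ℕ)) (d n (j:ℕ)) (d n ((τ i0 : Fin n):ℕ)) (d n ((τ j : Fin n):ℕ)) then 1 else 0)
          = (if ((j:ℕ) < (i0:ℕ) ∧ (i0:ℕ) ≤ ((τ j : Fin n):ℕ)) then 1 else 0) := by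
        intro j hj
        rw [hmemU] at hj
        refine if_congr ?_ rfl rfl
        rw [htaui0]
        exact eXi0row j.isLt (τ j).isLt i0.isLt (hvne j hj.2) (htauv j hj.1) hi0v
      have e4 : (if (((0:Fin n):ℕ) < (i0:ℕ) ∧ (i0:ℕ) ≤ ((τ 0 : Fin n):ℕ)) then 1 else 0)
          = (if ((i0:ℕ) ≤ ((τ 0 : Fin n):ℕ)) then 1 else 0) := by
        refine if_congr ?_ rfl rfl
        rw [hvz]
        omega
      have e5 : (if ((i0:ℕ) < (i0:ℕ) ∧ (i0:ℕ) ≤ ((τ i0 : Fin n):ℕ)) then 1 else 0) = 0 :=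
        if_neg (by omega)
      have e6 := Finset.sum_congr rfl e3
      omega
    -- generic rows
    have h5 : ∀ i ∈ U,
        (∑ j : Fin n, (if C4 (d n (i:ℕ)) (d n (j:ℕ)) (d n ((τ i : Fin n):ℕ)) (d n ((τ j : Fin n):ℕ)) then 1 else 0))
        = (if (((τ i : Fin n):ℕ) < ((τ 0 : Fin n):ℕ) ∧ ((τ 0 : Fin n):ℕ) < (i:ℕ)) then 1 else 0)
          + ∑ j ∈ U, (if C4 (i:ℕ) (j:ℕ) ((τ i : Fin n):ℕ) ((τ j : Fin n):ℕ) then 1 else 0) := by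
      intro i hi
      rw [hmemU] at hi
      have d1 : (∑ j : Fin n, (if C4 (d n (i:ℕ)) (d n (j:ℕ)) (d n ((τ i : Fin n):ℕ)) (d n ((τ j : Fin n):ℕ)) then 1 else 0))
          = (if C4 (d n (i:ℕ)) (d n ((0:Fin n):ℕ)) (d n ((τ i : Fin n):ℕ)) (d n ((τ 0 : Fin n):ℕ)) then 1 else 0)
            + (if C4 (d n (i:ℕ)) (d n (i0:ℕ)) (d n ((τ i : Fin n):ℕ)) (d n ((τ i0 : Fin n):ℕ)) then 1 else 0)
            + ∑ j ∈ U, (if C4 (d n (i:ℕ)) (d n (j:ℕ)) (d n ((τ i : Fin n):ℕ)) (d n ((τ j : Fin n):ℕ)) then 1 else 0) :=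
        decomp i0 hi0ne _
      have e1 : (if C4 (d n (i:ℕ)) (d n ((0:Fin n):ℕ)) (d n ((τ i : Fin n):ℕ)) (d n ((τ 0 : Fin n):ℕ)) then 1 else 0)
          = (if (((τ i : Fin n):ℕ) < ((τ 0 : Fin n):ℕ) ∧ ((τ 0 : Fin n):ℕ) < (i:ℕ)) then 1 else 0) := by
        refine if_congr ?_ rfl rfl
        rw [hvz]
        exact eXcol0 i.isLt (τ i).isLt (τ 0).isLt (hvne i hi.2) (htauv i hi.1) htv
      have e2 : (if C4 (d n (i:ℕ)) (d n (i0:ℕ)) (d n ((τ i : Fin n):ℕ)) (d n ((τ i0 : Fin n):ℕ)) then 1 else 0) = 0 := by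
        refine if_neg ?_
        rw [htaui0]
        exact nXi0col i.isLt i0.isLt (τ i).isLt (hvne i hi.2) hi0v (htauv i hi.1)
      have e3 : ∀ j ∈ U, (if C4 (d n (i:ℕ)) (d n (j:ℕ)) (d n ((τ i : Fin n):ℕ)) (d n ((τ j : Fin n):ℕ)) then 1 else 0)
          = (if C4 (i:ℕ) (j:ℕ) ((τ i : Fin n):ℕ) ((τ j : Fin n):ℕ) then 1 else 0) := by
        intro j hj
        rw [hmemU] at hj
        exact if_congr (C4_dec i.isLt j.isLt (τ i).isLt (τ j).isLt
          (iff_of_false (hvne i hi.2) (htauv i hi.1))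
          (iff_of_false (hvne j hj.2) (htauv j hj.1))) rfl rfl
      have e6 := Finset.sum_congr rfl e3
      omega
    have h6 : ∀ i ∈ U,
        (∑ j : Fin n, (if C4 (i:ℕ) (j:ℕ) ((τ i : Fin n):ℕ) ((τ j : Fin n):ℕ) then 1 else 0))
        = (if ((i:ℕ) ≤ ((τ 0 : Fin n):ℕ) ∧ ((τ 0 : Fin n):ℕ) < ((τ i : Fin n):ℕ)) then 1 else 0)
          + ∑ j ∈ U, (if C4 (i:ℕ) (j:ℕ) ((τ i : Fin n):ℕ) ((τ j : Fin n):ℕ) then 1 else 0) := by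
      intro i hi
      rw [hmemU] at hi
      have d1 : (∑ j : Fin n, (if C4 (i:ℕ) (j:ℕ) ((τ i : Fin n):ℕ) ((τ j : Fin n):ℕ) then 1 else 0))
          = (if C4 (i:ℕ) ((0:Fin n):ℕ) ((τ i : Fin n):ℕ) ((τ 0 : Fin n):ℕ) then 1 else 0)
            + (if C4 (i:ℕ) (i0:ℕ) ((τ i : Fin n):ℕ) ((τ i0 : Fin n):ℕ) then 1 else 0)
            + ∑ j ∈ U, (if C4 (i:ℕ) (j:ℕ) ((τ i : Fin n):ℕ) ((τ j : Fin n):ℕ) then 1 else 0) :=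
        decomp i0 hi0ne _
      have e1 : (if C4 (i:ℕ) ((0:Fin n):ℕ) ((τ i : Fin n):ℕ) ((τ 0 : Fin n):ℕ) then 1 else 0)
          = (if ((i:ℕ) ≤ ((τ 0 : Fin n):ℕ) ∧ ((τ 0 : Fin n):ℕ) < ((τ i : Fin n):ℕ)) then 1 else 0) := by
        refine if_congr ?_ rfl rfl
        rw [hvz]
        exact eYcol0 (hvne i hi.2)
      have e2 : (if C4 (i:ℕ) (i0:ℕ) ((τ i : Fin n):ℕ) ((τ i0 : Fin n):ℕ) then 1 else 0) = 0 := by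
        refine if_neg ?_
        rw [htaui0]
        exact nYi0col
      omega
    -- relating full sums to U-sums for the indicator columns
    have hPY : (∑ j : Fin n, (if ((j:ℕ) ≤ ((τ 0 : Fin n):ℕ) ∧ ((τ 0 : Fin n):ℕ) < ((τ j : Fin n):ℕ)) then 1 else 0))
        = ∑ i ∈ U, (if ((i:ℕ) ≤ ((τ 0 : Fin n):ℕ) ∧ ((τ 0 : Fin n):ℕ) < ((τ i : Fin n):ℕ)) then 1 else 0) := by
      have d1 : (∑ j : Fin n, (if ((j:ℕ) ≤ ((τ 0 : Fin n):ℕ) ∧ ((τ 0 : Fin n):ℕ) < ((τ j : Fin n):ℕ)) then 1 else 0))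
          = (if (((0:Fin n):ℕ) ≤ ((τ 0 : Fin n):ℕ) ∧ ((τ 0 : Fin n):ℕ) < ((τ 0 : Fin n):ℕ)) then 1 else 0)
            + (if ((i0:ℕ) ≤ ((τ 0 : Fin n):ℕ) ∧ ((τ 0 : Fin n):ℕ) < ((τ i0 : Fin n):ℕ)) then 1 else 0)
            + ∑ i ∈ U, (if ((i:ℕ) ≤ ((τ 0 : Fin n):ℕ) ∧ ((τ 0 : Fin n):ℕ) < ((τ i : Fin n):ℕ)) then 1 else 0) :=
        decomp i0 hi0ne _
      have e1 : (if (((0:Fin n):ℕ) ≤ ((τ 0 : Fin n):ℕ) ∧ ((τ 0 : Fin n):ℕ) < ((τ 0 : Fin n):ℕ)) then 1 else 0) = 0 :=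
        if_neg (by omega)
      have e2 : (if ((i0:ℕ) ≤ ((τ 0 : Fin n):ℕ) ∧ ((τ 0 : Fin n):ℕ) < ((τ i0 : Fin n):ℕ)) then 1 else 0) = 0 :=
        if_neg (by rw [htaui0]; omega)
      omega
    have hPX : (∑ j : Fin n, (if (((τ j : Fin n):ℕ) < ((τ 0 : Fin n):ℕ) ∧ ((τ 0 : Fin n):ℕ) < (j:ℕ)) then 1 else 0))
        = (if (((τ 0 : Fin n):ℕ) < (i0:ℕ)) then 1 else 0)
          + ∑ i ∈ U, (if (((τ i : Fin n):ℕ) < ((τ 0 : Fin n):ℕ) ∧ ((τ 0 : Fin n):ℕ) < (i:ℕ)) then 1 else 0) := by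
      have d1 : (∑ j : Fin n, (if (((τ j : Fin n):ℕ) < ((τ 0 : Fin n):ℕ) ∧ ((τ 0 : Fin n):ℕ) < (j:ℕ)) then 1 else 0))
          = (if (((τ 0 : Fin n):ℕ) < ((τ 0 : Fin n):ℕ) ∧ ((τ 0 : Fin n):ℕ) < ((0:Fin n):ℕ)) then 1 else 0)
            + (if (((τ i0 : Fin n):ℕ) < ((τ 0 : Fin n):ℕ) ∧ ((τ 0 : Fin n):ℕ) < (i0:ℕ)) then 1 else 0)
            + ∑ i ∈ U, (if (((τ i : Fin n):ℕ) < ((τ 0 : Fin n):ℕ) ∧ ((τ 0 : Fin n):ℕ) < (i:ℕ)) then 1 else 0) :=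
        decomp i0 hi0ne _
      have e1 : (if (((τ 0 : Fin n):ℕ) < ((τ 0 : Fin n):ℕ) ∧ ((τ 0 : Fin n):ℕ) < ((0:Fin n):ℕ)) then 1 else 0) = 0 :=
        if_neg (by omega)
      have e2 : (if (((τ i0 : Fin n):ℕ) < ((τ 0 : Fin n):ℕ) ∧ ((τ 0 : Fin n):ℕ) < (i0:ℕ)) then 1 else 0)
          = (if (((τ 0 : Fin n):ℕ) < (i0:ℕ)) then 1 else 0) := by
        refine if_congr ?_ rfl rfl
        rw [htaui0]
        omega
      omega
    -- the two counting identities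
    have count1 : (∑ j : Fin n, (if ((j:ℕ) ≤ ((τ 0 : Fin n):ℕ) ∧ ((τ 0 : Fin n):ℕ) < ((τ j : Fin n):ℕ)) then 1 else 0))
        = ∑ j : Fin n, (if (((τ j : Fin n):ℕ) < ((τ 0 : Fin n):ℕ) ∧ ((τ 0 : Fin n):ℕ) < (j:ℕ)) then 1 else 0) := by
      have perm1 : (∑ j : Fin n, (if (((τ j : Fin n):ℕ) ≤ ((τ 0 : Fin n):ℕ)) then (1:ℕ) else 0))
          = ∑ j : Fin n, (if ((j:ℕ) ≤ ((τ 0 : Fin n):ℕ)) then (1:ℕ) else 0) :=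
        sum_perm τ (fun v => if ((v:ℕ) ≤ ((τ 0 : Fin n):ℕ)) then (1:ℕ) else 0)
      have split1 : ∀ j : Fin n, (if ((j:ℕ) ≤ ((τ 0 : Fin n):ℕ)) then (1:ℕ) else 0)
          = (if ((j:ℕ) ≤ ((τ 0 : Fin n):ℕ) ∧ ((τ j : Fin n):ℕ) ≤ ((τ 0 : Fin n):ℕ)) then 1 else 0)
            + (if ((j:ℕ) ≤ ((τ 0 : Fin n):ℕ) ∧ ((τ 0 : Fin n):ℕ) < ((τ j : Fin n):ℕ)) then 1 else 0) := by
        intro j; split_ifs <;> omega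
      have split2 : ∀ j : Fin n, (if (((τ j : Fin n):ℕ) ≤ ((τ 0 : Fin n):ℕ)) then (1:ℕ) else 0)
          = (if ((j:ℕ) ≤ ((τ 0 : Fin n):ℕ) ∧ ((τ j : Fin n):ℕ) ≤ ((τ 0 : Fin n):ℕ)) then 1 else 0)
            + (if (((τ j : Fin n):ℕ) < ((τ 0 : Fin n):ℕ) ∧ ((τ 0 : Fin n):ℕ) < (j:ℕ)) then 1 else 0) := by
        intro j
        have hx : ((τ j : Fin n):ℕ) = ((τ 0 : Fin n):ℕ) → (j:ℕ) = 0 := by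
          intro h
          have : j = 0 := τ.injective (Fin.ext h)
          rw [this, hvz]
        split_ifs <;> omega
      have a1 := Finset.sum_congr rfl (fun j (_ : j ∈ (Finset.univ : Finset (Fin n))) => split1 j)
      have a2 := Finset.sum_congr rfl (fun j (_ : j ∈ (Finset.univ : Finset (Fin n))) => split2 j)
      rw [Finset.sum_add_distrib] at a1 a2
      omega
    have count2 : (∑ j : Fin n, (if ((j:ℕ) < (i0:ℕ) ∧ (i0:ℕ) ≤ ((τ j : Fin n):ℕ)) then 1 else 0))
        = (∑ j : Fin n, (if (((τ j : Fin n):ℕ) < (i0:ℕ) ∧ (i0:ℕ) < (j:ℕ)) then 1 else 0)) + 1 := by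
      have perm2 : (∑ j : Fin n, (if (((τ j : Fin n):ℕ) < (i0:ℕ)) then (1:ℕ) else 0))
          = ∑ j : Fin n, (if ((j:ℕ) < (i0:ℕ)) then (1:ℕ) else 0) :=
        sum_perm τ (fun v => if ((v:ℕ) < (i0:ℕ)) then (1:ℕ) else 0)
      have split3 : ∀ j : Fin n, (if ((j:ℕ) < (i0:ℕ)) then (1:ℕ) else 0)
          = (if ((j:ℕ) < (i0:ℕ) ∧ ((τ j : Fin n):ℕ) < (i0:ℕ)) then 1 else 0)
            + (if ((j:ℕ) < (i0:ℕ) ∧ (i0:ℕ) ≤ ((τ j : Fin n):ℕ)) then 1 else 0) := by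
        intro j; split_ifs <;> omega
      have split4 : ∀ j : Fin n, (if (((τ j : Fin n):ℕ) < (i0:ℕ)) then (1:ℕ) else 0)
          = (if ((j:ℕ) < (i0:ℕ) ∧ ((τ j : Fin n):ℕ) < (i0:ℕ)) then 1 else 0)
            + (if (((τ j : Fin n):ℕ) < (i0:ℕ) ∧ (i0:ℕ) < (j:ℕ)) then 1 else 0)
            + (if ((j:ℕ) = (i0:ℕ)) then 1 else 0) := by
        intro j
        have hB : (j:ℕ) = (i0:ℕ) → ((τ j : Fin n):ℕ) = 0 := by
          intro h
          rw [show j = i0 from Fin.ext h, htaui0]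
        have hi0v' := hi0v
        split_ifs <;> omega
      have sumdiag : (∑ j : Fin n, (if ((j:ℕ) = (i0:ℕ)) then (1:ℕ) else 0)) = 1 := by
        have e : ∀ j : Fin n, (if ((j:ℕ) = (i0:ℕ)) then (1:ℕ) else 0) = (if j = i0 then (1:ℕ) else 0) :=
          fun j => if_congr ⟨fun h => Fin.ext h, fun h => congrArg Fin.val h⟩ rfl rfl
        rw [Finset.sum_congr rfl (fun j (_ : j ∈ (Finset.univ : Finset (Fin n))) => e j)]
        simp
      have a3 := Finset.sum_congr rfl (fun j (_ : j ∈ (Finset.univ : Finset (Fin n))) => split3 j)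
      have a4 := Finset.sum_congr rfl (fun j (_ : j ∈ (Finset.univ : Finset (Fin n))) => split4 j)
      rw [Finset.sum_add_distrib] at a3
      rw [Finset.sum_add_distrib, Finset.sum_add_distrib] at a4
      omega
    -- assemble
    have hXU := Finset.sum_congr rfl h5
    have hYU := Finset.sum_congr rfl h6
    rw [Finset.sum_add_distrib] at hXU hYU
    by_cases hc : ((i0:ℕ) ≤ ((τ 0 : Fin n):ℕ))
    · rw [if_pos hc] at h3
      rw [if_neg (by omega)] at hPX
      omega
    · rw [if_neg hc] at h3
      rw [if_pos (by omega)] at hPX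
      omega

lemma cr_rot {n : ℕ} [NeZero n] (τ : Equiv.Perm (Fin n)) :
    cr (conj 1 τ) = cr τ := by
  have hn : 0 < n := Nat.pos_of_ne_zero (NeZero.ne n)
  set ρ := conj 1 τ with hρdef
  have hρ : ∀ x : Fin n, ρ (x - 1) = τ x - 1 := by
    intro x
    rw [hρdef, conj_apply, sub_add_cancel]
  rw [cr_eq_sum, cr_eq_sum]
  -- reindex the left side by x ↦ x - 1
  have reix : ∀ g : Fin n → ℕ, ∑ i : Fin n, g i = ∑ i : Fin n, g (i - 1) := by
    intro g
    exact (Equiv.sum_comp (Equiv.subRight (1 : Fin n)) g).symm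
  rw [reix (fun i => ∑ j : Fin n, (if C4 (i : ℕ) (j : ℕ) ((ρ i : Fin n) : ℕ) ((ρ j : Fin n) : ℕ) then 1 else 0))]
  have step : ∀ i : Fin n,
      (∑ j : Fin n, (if C4 ((i - 1 : Fin n) : ℕ) (j : ℕ) ((ρ (i-1) : Fin n) : ℕ) ((ρ j : Fin n) : ℕ) then 1 else 0))
      = ∑ j : Fin n, (if C4 (d n (i:ℕ)) (d n (j:ℕ)) (d n ((τ i : Fin n):ℕ)) (d n ((τ j : Fin n):ℕ)) then 1 else 0) := by
    intro i
    rw [reix (fun j => (if C4 ((i - 1 : Fin n) : ℕ) (j : ℕ) ((ρ (i-1) : Fin n) : ℕ) ((ρ j : Fin n) : ℕ) then 1 else 0))]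
    refine Finset.sum_congr rfl fun j _ => ?_
    rw [hρ i, hρ j, dec_val, dec_val, dec_val, dec_val]
  simp only [step]
  exact key_count τ

lemma conj_zero {n : ℕ} [NeZero n] (σ : Equiv.Perm (Fin n)) : conj 0 σ = σ := by
  ext x
  rw [conj_apply]
  simp

lemma conj_succ {n : ℕ} [NeZero n] (c : Fin n) (σ : Equiv.Perm (Fin n)) :
    conj (c + 1) σ = conj 1 (conj c σ) := by
  ext x
  rw [conj_apply, conj_apply, conj_apply]
  have e : x + (c + 1) = x + 1 + c := by abel
  rw [e, sub_sub]

lemma cr_conj_nat {n : ℕ} [NeZero n] (σ : Equiv.Perm (Fin n)) (m : ℕ) :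
    cr (conj (m : Fin n) σ) = cr σ := by
  induction m with
  | zero => rw [Nat.cast_zero, conj_zero]
  | succ p ih => rw [Nat.cast_add, Nat.cast_one, conj_succ, cr_rot, ih]

lemma subk_val {n k : ℕ} [NeZero n] (hk : k < n) (x : Fin n) :
    ((x - (k : Fin n) : Fin n) : ℕ) = if k ≤ (x:ℕ) then (x:ℕ) - k else (x:ℕ) + (n - k) := by
  have hx := x.isLt
  rw [Fin.coe_sub]
  have hv : ((k : Fin n) : ℕ) = k := by rw [Fin.val_natCast]; exact Nat.mod_eq_of_lt hk
  rw [hv]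
  by_cases h : k ≤ (x:ℕ)
  · rw [if_pos h]
    have e : n - k + (x:ℕ) = n + ((x:ℕ) - k) := by omega
    rw [e, Nat.add_mod_left, Nat.mod_eq_of_lt (by omega)]
  · rw [if_neg h, Nat.mod_eq_of_lt (by omega)]
    omega

lemma addk_val {n k : ℕ} [NeZero n] (x : Fin n) :
    ((x + (k : Fin n) : Fin n) : ℕ) = ((x:ℕ) + k) % n := by
  rw [Fin.val_add, Fin.val_natCast, Nat.add_mod_mod]

lemma wex_eq_sum {n : ℕ} (τ : Equiv.Perm (Fin n)) :
    wex τ = ∑ i : Fin n, (if ((i:ℕ) ≤ ((τ i : Fin n):ℕ)) then 1 else 0) :=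
  Finset.card_filter _ _

lemma conj_val {n k : ℕ} [NeZero n] (hk : k < n) (σ : Equiv.Perm (Fin n)) (i : Fin n) :
    ((conj (k : Fin n) σ) i : ℕ) =
      (if k ≤ ((σ (i + (k:Fin n)) : Fin n):ℕ) then ((σ (i + (k:Fin n)) : Fin n):ℕ) - k
       else ((σ (i + (k:Fin n)) : Fin n):ℕ) + (n - k)) := by
  rw [conj_apply, subk_val hk]

lemma wex_conj {n k : ℕ} [NeZero n] (hk1 : 1 ≤ k) (hkn : k ≤ n) (σ : Equiv.Perm (Fin n))
    (hdom : ∀ i : Fin n, (i:ℕ) < k → k ≤ ((σ i : Fin n) : ℕ)) :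
    wex (conj (k : Fin n) σ) = wex σ := by
  have hklt : k < n := by
    rcases Nat.lt_or_ge k n with h | h
    · exact h
    · exfalso
      have h0 : ((0 : Fin n):ℕ) < k := by rw [Fin.val_zero]; omega
      have h1 := hdom 0 h0
      have h2 := (σ 0).isLt
      omega
  rw [wex_eq_sum, wex_eq_sum]
  have reix : ∀ g : Fin n → ℕ, ∑ i : Fin n, g i = ∑ i : Fin n, g (i - (k : Fin n)) :=
    fun g => (Equiv.sum_comp (Equiv.subRight ((k : ℕ) : Fin n)) g).symm
  rw [reix (fun i => if ((i:ℕ) ≤ (((conj (k : Fin n) σ) i : Fin n):ℕ)) then 1 else 0)]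
  have hc : ∀ x : Fin n, (conj (k : Fin n) σ) (x - (k:Fin n)) = σ x - (k:Fin n) := by
    intro x; rw [conj_apply, sub_add_cancel]
  simp only [hc]
  have key : ∀ i : Fin n,
      (if (((i - (k:Fin n) : Fin n):ℕ) ≤ ((σ i - (k:Fin n) : Fin n):ℕ)) then (1:ℕ) else 0)
        + (if ((i:ℕ) < k) then 1 else 0)
      = (if ((i:ℕ) ≤ ((σ i : Fin n):ℕ)) then 1 else 0)
        + (if (k ≤ (i:ℕ) ∧ ((σ i : Fin n):ℕ) < k) then 1 else 0) := by
    intro i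
    rw [subk_val hklt, subk_val hklt]
    have h1 := i.isLt
    have h2 := (σ i).isLt
    have h3 := hdom i
    split_ifs <;> omega
  have key2 : ∀ i : Fin n, (if (((σ i : Fin n):ℕ) < k) then (1:ℕ) else 0)
      = (if (k ≤ (i:ℕ) ∧ ((σ i : Fin n):ℕ) < k) then 1 else 0) := by
    intro i
    have h3 := hdom i
    split_ifs <;> omega
  have perm : (∑ i : Fin n, (if (((σ i : Fin n):ℕ) < k) then (1:ℕ) else 0))
      = ∑ i : Fin n, (if ((i:ℕ) < k) then (1:ℕ) else 0) :=
    sum_perm σ (fun v => if ((v:ℕ) < k) then (1:ℕ) else 0)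
  have s1 := Finset.sum_congr rfl (fun i (_ : i ∈ (Finset.univ : Finset (Fin n))) => key i)
  rw [Finset.sum_add_distrib, Finset.sum_add_distrib] at s1
  have s2 := Finset.sum_congr rfl (fun i (_ : i ∈ (Finset.univ : Finset (Fin n))) => key2 i)
  omega

end Stmt14Aux

namespace Stmt14Aux

open Fin.NatCast

lemma k_lt_n_of_dom {n k : ℕ} [NeZero n] (hk1 : 1 ≤ k) (σ : Equiv.Perm (Fin n))
    (hdom : ∀ i : Fin n, (i:ℕ) < k → k ≤ ((σ i : Fin n) : ℕ)) : k < n := by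
  rcases Nat.lt_or_ge k n with h | h
  · exact h
  · exfalso
    have h0 : ((0 : Fin n):ℕ) < k := by rw [Fin.val_zero]; omega
    have h1 := hdom 0 h0
    have h2 := (σ 0).isLt
    omega

lemma idx_val_ge {n k : ℕ} [NeZero n] (hk : k < n) (i : Fin n) (hi : n - k ≤ (i:ℕ)) :
    ((i + (k : Fin n) : Fin n) : ℕ) = (i:ℕ) + k - n := by
  have h1 := i.isLt
  rw [addk_val]
  have e : (i:ℕ) + k = n + ((i:ℕ) + k - n) := by omega
  rw [e, Nat.add_mod_left, Nat.mod_eq_of_lt (by omega)]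
  omega

lemma codom_of_dom {n k : ℕ} [NeZero n] (hk1 : 1 ≤ k) (σ : Equiv.Perm (Fin n))
    (hdom : ∀ i : Fin n, (i:ℕ) < k → k ≤ ((σ i : Fin n) : ℕ)) :
    ∀ i : Fin n, n - k ≤ (i:ℕ) → (((conj (k : Fin n) σ) i : Fin n) : ℕ) < n - k := by
  intro i hi
  have hklt := k_lt_n_of_dom hk1 σ hdom
  have hidx := idx_val_ge hklt i hi
  have h1 := i.isLt
  have hlt : ((i + (k : Fin n) : Fin n) : ℕ) < k := by omega
  have hs := hdom _ hlt
  have h2 := (σ (i + (k : Fin n))).isLt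
  rw [conj_val hklt, if_pos hs]
  omega

lemma dom_of_codom {n k : ℕ} [NeZero n] (hk1 : 1 ≤ k) (hkn : k ≤ n) (τ : Equiv.Perm (Fin n))
    (hcod : ∀ i : Fin n, n - k ≤ (i:ℕ) → ((τ i : Fin n) : ℕ) < n - k) :
    ∀ i : Fin n, (i:ℕ) < k → k ≤ (((conj (-(k : Fin n)) τ) i : Fin n) : ℕ) := by
  have hklt : k < n := by
    rcases Nat.lt_or_ge k n with h | h
    · exact h
    · exfalso
      have h0 : n - k ≤ ((0 : Fin n):ℕ) := by rw [Fin.val_zero]; omega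
      have h1 := hcod 0 h0
      omega
  intro i hi
  have hap : (conj (-(k : Fin n)) τ) i = τ (i - (k : Fin n)) + (k : Fin n) := by
    rw [conj_apply, ← sub_eq_add_neg, sub_neg_eq_add]
  have hsub : ((i - (k : Fin n) : Fin n) : ℕ) = (i:ℕ) + (n - k) := by
    rw [subk_val hklt, if_neg (by omega)]
  have h1 := i.isLt
  have hv := hcod (i - (k : Fin n)) (by omega)
  rw [hap, addk_val, Nat.mod_eq_of_lt (by omega)]
  omega

lemma conj_conj {n : ℕ} [NeZero n] (c : Fin n) (σ : Equiv.Perm (Fin n)) :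
    conj (-c) (conj c σ) = σ := by
  ext x
  rw [conj_apply, conj_apply]
  have e : x + -c + c = x := by abel
  rw [e, sub_neg_eq_add, sub_add_cancel]

lemma conj_conj' {n : ℕ} [NeZero n] (c : Fin n) (σ : Equiv.Perm (Fin n)) :
    conj c (conj (-c) σ) = σ := by
  have h := conj_conj (-c) σ
  rw [neg_neg] at h
  exact h

end Stmt14Aux

/-- Φ_k (described by the explicit formula below) is a bijection from
`^kS_n = {σ : σ(i) > k for 1 ≤ i ≤ k}` onto
`S_n^k = {σ : σ(n+1−i) < n+1−k for 1 ≤ i ≤ k}` preserving `wex` and `cr`.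
Everything is written 0-indexed: 1-indexed `i` corresponds to `i-1 : Fin n`. -/
theorem stmt14 (n k : ℕ) (hk1 : 1 ≤ k) (hkn : k ≤ n) :
    ∃ Φ : {σ : Equiv.Perm (Fin n) // ∀ i : Fin n, (i : ℕ) < k → k ≤ (σ i : ℕ)} →
          {σ : Equiv.Perm (Fin n) // ∀ i : Fin n, n - k ≤ (i : ℕ) → (σ i : ℕ) < n - k},
      Function.Bijective Φ ∧
      (∀ σ : {σ : Equiv.Perm (Fin n) // ∀ i : Fin n, (i : ℕ) < k → k ≤ (σ i : ℕ)},
        ∀ i : Fin n,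
          ((Φ σ : Equiv.Perm (Fin n)) i : ℕ) =
            (let s : ℕ :=
              ((σ : Equiv.Perm (Fin n))
                ⟨((i : ℕ) + k) % n, Nat.mod_lt _ (lt_of_lt_of_le hk1 hkn)⟩ : ℕ);
             if (i : ℕ) < n - k then (if k ≤ s then s - k else s + (n - k)) else s - k)) ∧
      (∀ σ, wex (Φ σ : Equiv.Perm (Fin n)) = wex (σ : Equiv.Perm (Fin n)) ∧
            cr (Φ σ : Equiv.Perm (Fin n)) = cr (σ : Equiv.Perm (Fin n))) := by
  open Fin.NatCast in
  haveI : NeZero n := ⟨by omega⟩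
  refine ⟨fun σ => ⟨Stmt14Aux.conj (k : Fin n) σ.1, Stmt14Aux.codom_of_dom hk1 σ.1 σ.2⟩,
      ?_, ?_, ?_⟩
  · refine Function.bijective_iff_has_inverse.mpr
      ⟨fun τ => ⟨Stmt14Aux.conj (-(k : Fin n)) τ.1, Stmt14Aux.dom_of_codom hk1 hkn τ.1 τ.2⟩, ?_, ?_⟩
    · intro σ
      exact Subtype.ext (Stmt14Aux.conj_conj _ _)
    · intro τ
      exact Subtype.ext (Stmt14Aux.conj_conj' _ _)
  · intro σ i
    have hklt := Stmt14Aux.k_lt_n_of_dom hk1 σ.1 σ.2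
    have hidx : i + ((k : ℕ) : Fin n)
        = (⟨((i : ℕ) + k) % n, Nat.mod_lt _ (lt_of_lt_of_le hk1 hkn)⟩ : Fin n) :=
      Fin.ext (by rw [Stmt14Aux.addk_val])
    show ((Stmt14Aux.conj (k : Fin n) σ.1) i : ℕ) =
      (if (i : ℕ) < n - k then
        (if k ≤ ((σ.1 (⟨((i : ℕ) + k) % n, Nat.mod_lt _ (lt_of_lt_of_le hk1 hkn)⟩ : Fin n) : Fin n) : ℕ)
         then ((σ.1 (⟨((i : ℕ) + k) % n, Nat.mod_lt _ (lt_of_lt_of_le hk1 hkn)⟩ : Fin n) : Fin n) : ℕ) - k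
         else ((σ.1 (⟨((i : ℕ) + k) % n, Nat.mod_lt _ (lt_of_lt_of_le hk1 hkn)⟩ : Fin n) : Fin n) : ℕ) + (n - k))
       else ((σ.1 (⟨((i : ℕ) + k) % n, Nat.mod_lt _ (lt_of_lt_of_le hk1 hkn)⟩ : Fin n) : Fin n) : ℕ) - k)
    rw [Stmt14Aux.conj_val hklt, hidx]
    by_cases hcase : (i : ℕ) < n - k
    · rw [if_pos hcase]
    · rw [if_neg hcase]
      have h1 := i.isLt
      have hvlt : (((⟨((i : ℕ) + k) % n, Nat.mod_lt _ (lt_of_lt_of_le hk1 hkn)⟩ : Fin n)) : ℕ) < k := by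
        show ((i : ℕ) + k) % n < k
        have e : ((i : ℕ) + k) = n + ((i : ℕ) + k - n) := by omega
        rw [e, Nat.add_mod_left, Nat.mod_eq_of_lt (by omega)]
        omega
      have hsk := σ.2 _ hvlt
      rw [if_pos hsk]
  · intro σ
    exact ⟨Stmt14Aux.wex_conj hk1 hkn σ.1 σ.2, Stmt14Aux.cr_conj_nat σ.1 k⟩
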